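/- arXiv:1204.0734 — 3 statements merged into one kernel-verified Lean document; each statement's English description precedes it below -/
import Mathlib

section
/- Let (H = (V, F), p) be a framework (vectors p_i assigned to nodes) and T ⊆ V such that S = V \ T is a stable (independent) set in H, each node of S has degree at most k−1 in H, and the span of {p_i : i ∈ T} has dimension at most k. Then there exists a configuration q of H in R^k equivalent to p, i.e., q_iᵀq_j = p_iᵀp_j for all i ∈ V and all edges ij ∈ F. -/
open Module Submodule

lemma exists_linearIsometry_of_finrank_le {E : Type*} [NormedAddCommGroup E]
    [InnerProductSpace ℝ E] [FiniteDimensional ℝ E] {k : ℕ}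
    (h : Module.finrank ℝ E ≤ k) :
    Nonempty (E →ₗᵢ[ℝ] EuclideanSpace ℝ (Fin k)) := by
  classical
  let b := stdOrthonormalBasis ℝ E
  let g : Fin (Module.finrank ℝ E) → EuclideanSpace ℝ (Fin k) :=
    fun i => EuclideanSpace.single (Fin.castLE h i) 1
  have hg : Orthonormal ℝ g :=
    (EuclideanSpace.orthonormal_single (𝕜 := ℝ) (ι := Fin k)).comp _
      (Fin.castLE_injective h)
  let f : E →ₗ[ℝ] EuclideanSpace ℝ (Fin k) := b.toBasis.constr ℝ g
  have hfb : f ∘ b.toBasis = g := funext fun i => by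
    simpa [f] using b.toBasis.constr_basis ℝ g i
  exact ⟨f.isometryOfOrthonormal b.orthonormal (hfb ▸ hg)⟩

/-- Folding the vectors labeling a stable set: if `S = V \ T` is stable in `H`, each node of `S`
has degree at most `k − 1` in `H` (i.e. its closed neighborhood has at most `k` elements), and
`span {p_i : i ∈ T}` has dimension at most `k`, then there is an equivalent configuration of `H`
in `ℝ^k` (same norms on all nodes and same inner products on all edges). -/
theorem folding_stable_set {V : Type*} [Fintype V] [DecidableEq V]
    (H : SimpleGraph V) [DecidableRel H.Adj] (m k : ℕ)
    (p : V → EuclideanSpace ℝ (Fin m)) (T : Set V)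
    (hstable : ∀ u ∈ Tᶜ, ∀ v ∈ Tᶜ, ¬H.Adj u v)
    (hdeg : ∀ v ∈ Tᶜ, H.degree v + 1 ≤ k)
    (hspan : Module.finrank ℝ ↥(Submodule.span ℝ (p '' T)) ≤ k) :
    ∃ q : V → EuclideanSpace ℝ (Fin k),
      (∀ i, ‖q i‖ = ‖p i‖) ∧
      ∀ i j, H.Adj i j → (inner ℝ (q i) (q j) : ℝ) = inner ℝ (p i) (p j) := by
  classical
  set W : Submodule ℝ (EuclideanSpace ℝ (Fin m)) := Submodule.span ℝ (p '' T) with hW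
  obtain ⟨f⟩ := exists_linearIsometry_of_finrank_le (E := W) hspan
  let P : EuclideanSpace ℝ (Fin m) →ₗ[ℝ] EuclideanSpace ℝ (Fin k) :=
    f.toLinearMap ∘ₗ (orthogonalProjection W).toLinearMap
  have hP : ∀ (x : EuclideanSpace ℝ (Fin m)) (hx : x ∈ W), P x = f ⟨x, hx⟩ := by
    intro x hx
    have : orthogonalProjection W x = ⟨x, hx⟩ :=
      Subtype.ext (Submodule.starProjection_eq_self_iff.mpr hx)
    simp [P, this]
  have hPn : ∀ (x : EuclideanSpace ℝ (Fin m)) (hx : x ∈ W), ‖P x‖ = ‖x‖ := by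
    intro x hx; rw [hP x hx, f.norm_map]; rfl
  have hPi : ∀ (x y : EuclideanSpace ℝ (Fin m)) (hx : x ∈ W) (hy : y ∈ W),
      (inner ℝ (P x) (P y) : ℝ) = inner ℝ x y := by
    intro x y hx hy
    rw [hP x hx, hP y hy, f.inner_map_map]; rfl
  have hpT : ∀ v ∈ T, p v ∈ W := fun v hv => Submodule.subset_span ⟨v, hv, rfl⟩
  have hnbT : ∀ v ∈ Tᶜ, ∀ u, H.Adj v u → u ∈ T := by
    intro v hv u hadj
    by_contra hu
    exact hstable v hv u hu hadj
  -- neighborhood spans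
  let U : V → Submodule ℝ (EuclideanSpace ℝ (Fin m)) := fun v => Submodule.span ℝ (p '' (H.neighborSet v))
  let w : V → EuclideanSpace ℝ (Fin m) := fun v => orthogonalProjection (U v) (p v)
  let M : V → Submodule ℝ (EuclideanSpace ℝ (Fin k)) := fun v => (U v).map P
  have hpU : ∀ v u, H.Adj v u → p u ∈ U v := fun v u h =>
    Submodule.subset_span ⟨u, h, rfl⟩
  have hUW : ∀ v ∈ Tᶜ, U v ≤ W := by
    intro v hv
    apply Submodule.span_mono
    apply Set.image_mono
    intro u hu
    exact hnbT v hv u hu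
  have hwU : ∀ v, w v ∈ U v := fun v => (orthogonalProjection (U v) (p v)).2
  have hperp : ∀ v, p v - w v ∈ (U v)ᗮ := fun v =>
    Submodule.sub_starProjection_mem_orthogonal (K := U v) (p v)
  have hMlt : ∀ v ∈ Tᶜ, Module.finrank ℝ (M v) < k := by
    intro v hv
    have h2 : p '' (H.neighborSet v) = ↑((H.neighborFinset v).image p) := by
      rw [Finset.coe_image, SimpleGraph.neighborFinset_def, Set.coe_toFinset]
    have h1 : Module.finrank ℝ (U v) ≤ H.degree v := by
      have hU2 : U v = Submodule.span ℝ ↑((H.neighborFinset v).image p) := by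
        simp only [U]; rw [h2]
      calc Module.finrank ℝ (U v) ≤ ((H.neighborFinset v).image p).card := by
            rw [hU2]; exact finrank_span_finset_le_card _
        _ ≤ (H.neighborFinset v).card := Finset.card_image_le
        _ = H.degree v := rfl
    have h3 : Module.finrank ℝ (M v) ≤ Module.finrank ℝ (U v) :=
      Submodule.finrank_map_le P (U v)
    have := hdeg v hv
    omega
  have hn : ∀ v ∈ Tᶜ, ∃ n : EuclideanSpace ℝ (Fin k),
      ‖n‖ = 1 ∧ ∀ x ∈ M v, (inner ℝ x n : ℝ) = 0 := by
    intro v hv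
    have hne : (M v)ᗮ ≠ ⊥ := by
      intro h
      have htop : M v = ⊤ := Submodule.orthogonal_eq_bot_iff.mp h
      have hlt := hMlt v hv
      rw [htop, finrank_top, finrank_euclideanSpace_fin] at hlt
      omega
    obtain ⟨x, hx, hx0⟩ := Submodule.ne_bot_iff _ |>.mp hne
    refine ⟨‖x‖⁻¹ • x, ?_, ?_⟩
    · rw [norm_smul, norm_inv, norm_norm,
        inv_mul_cancel₀ (norm_ne_zero_iff.mpr hx0)]
    · intro y hy
      have : ‖x‖⁻¹ • x ∈ (M v)ᗮ := Submodule.smul_mem _ _ hx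
      exact (Submodule.mem_orthogonal _ _).mp this y hy
  let n : V → EuclideanSpace ℝ (Fin k) := fun v =>
    if hv : v ∈ Tᶜ then (hn v hv).choose else 0
  have hn1 : ∀ v ∈ Tᶜ, ‖n v‖ = 1 := by
    intro v hv; simp only [n, dif_pos hv]; exact (hn v hv).choose_spec.1
  have hn0 : ∀ v ∈ Tᶜ, ∀ x ∈ M v, (inner ℝ x (n v) : ℝ) = 0 := by
    intro v hv; simp only [n, dif_pos hv]; exact (hn v hv).choose_spec.2
  refine ⟨fun v => if v ∈ T then P (p v) else P (w v) + ‖p v - w v‖ • n v, ?_, ?_⟩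
  · -- norms
    intro i
    by_cases hi : i ∈ T
    · simp only [if_pos hi]
      exact hPn (p i) (hpT i hi)
    · have hi' : i ∈ Tᶜ := hi
      simp only [if_neg hi]
      have hwW : w i ∈ W := hUW i hi' (hwU i)
      have hinner : (inner ℝ (P (w i)) (‖p i - w i‖ • n i) : ℝ) = 0 := by
        rw [real_inner_smul_right,
          hn0 i hi' (P (w i)) (Submodule.mem_map_of_mem (hwU i)), mul_zero]
      have hsq : ‖P (w i) + ‖p i - w i‖ • n i‖ ^ 2 = ‖p i‖ ^ 2 := by
        have e1 := norm_add_sq_real (P (w i)) (‖p i - w i‖ • n i)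
        have e2 : ‖(‖p i - w i‖ • n i)‖ = ‖p i - w i‖ := by
          rw [norm_smul, norm_norm, hn1 i hi', mul_one]
        have e3 : (inner ℝ (w i) (p i - w i) : ℝ) = 0 :=
          (Submodule.mem_orthogonal _ _).mp (hperp i) (w i) (hwU i)
        have e4 : p i = w i + (p i - w i) := by abel
        have e5 : ‖p i‖ ^ 2 = ‖w i‖ ^ 2 + ‖p i - w i‖ ^ 2 := by
          conv_lhs => rw [e4]
          rw [norm_add_sq_real, e3]; ring
        rw [e1, hinner, e2, hPn (w i) hwW, e5]; ring
      calc ‖P (w i) + ‖p i - w i‖ • n i‖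
          = Real.sqrt (‖P (w i) + ‖p i - w i‖ • n i‖ ^ 2) :=
            (Real.sqrt_sq (norm_nonneg _)).symm
        _ = Real.sqrt (‖p i‖ ^ 2) := by rw [hsq]
        _ = ‖p i‖ := Real.sqrt_sq (norm_nonneg _)
  · -- edges
    intro i j hadj
    have key : ∀ a b, H.Adj a b → a ∈ T → b ∈ Tᶜ →
        (inner ℝ (P (p a)) (P (w b) + ‖p b - w b‖ • n b) : ℝ) = inner ℝ (p a) (p b) := by
      intro a b hab ha hb
      have hpaU : p a ∈ U b := hpU b a hab.symm
      have hpaW : p a ∈ W := hpT a ha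
      have hwW : w b ∈ W := hUW b hb (hwU b)
      have h1 : (inner ℝ (P (p a)) (‖p b - w b‖ • n b) : ℝ) = 0 := by
        rw [real_inner_smul_right,
          hn0 b hb (P (p a)) (Submodule.mem_map_of_mem hpaU), mul_zero]
      have h2 : (inner ℝ (p a) (p b - w b) : ℝ) = 0 :=
        (Submodule.mem_orthogonal _ _).mp (hperp b) (p a) hpaU
      have h3 : (inner ℝ (p a) (w b) : ℝ) = inner ℝ (p a) (p b) := by
        have := inner_sub_right (𝕜 := ℝ) (p a) (p b) (w b)
        rw [h2] at this
        linarith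
      rw [inner_add_right, h1, add_zero, hPi (p a) (w b) hpaW hwW, h3]
    by_cases hi : i ∈ T <;> by_cases hj : j ∈ T
    · simp only [if_pos hi, if_pos hj]
      exact hPi (p i) (p j) (hpT i hi) (hpT j hj)
    · simp only [if_pos hi, if_neg hj]
      exact key i j hadj hi hj
    · simp only [if_neg hi, if_pos hj]
      rw [real_inner_comm, key j i hadj.symm hj hi, real_inner_comm]
    · exact absurd hadj (hstable i hi j hj)
end

section
/- Let (H = (V,F), p, Ω) be a psd stressed framework and let i ∈ V be a 2-node of the stressed graph with stressed neighbors i₁, i₂. Then p_i ∈ span{p_{i₁}, p_{i₂}}, so dim span(p) = dim span(p restricted to V \ {i}). Moreover, if the support graph of Ω is not the complete graph on {i, i₁, i₂}, then the Schur complement Ω_{−i} of Ω with respect to its (i,i)-entry is a nonzero psd stress matrix for the framework (H/i, p_{−i}), where H/i is obtained by contracting node i (replacing edges (i,i₁),(i,i₂) by edge (i₁,i₂)). -/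
/-- `Ω` is a stress matrix for the framework `(H, p)`: a nonzero symmetric matrix supported on
the vertices and edges of `H` satisfying the equilibrium condition at every node. -/
def IsStressMatrix {V : Type*} [Fintype V] {m : ℕ} (H : SimpleGraph V)
    (p : V → EuclideanSpace ℝ (Fin m)) (Ω : Matrix V V ℝ) : Prop :=
  Ω.IsSymm ∧ Ω ≠ 0 ∧ (∀ i j, i ≠ j → ¬H.Adj i j → Ω i j = 0) ∧
    ∀ i, ∑ j, Ω i j • p j = 0

/-- The graph `H/i` obtained by contracting the degree-two node `i` with neighbors `i₁, i₂`:
delete `i` and replace the edges `(i,i₁), (i,i₂)` by the edge `(i₁,i₂)`. -/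
def contractNode {V : Type*} (H : SimpleGraph V) (i i₁ i₂ : V) :
    SimpleGraph {x : V // x ≠ i} :=
  SimpleGraph.fromRel fun a b => H.Adj a b ∨ ((a : V) = i₁ ∧ (b : V) = i₂)

lemma sum_split {V : Type*} [Fintype V] [DecidableEq V] {M : Type*} [AddCommMonoid M]
    (i : V) (f : V → M) :
    ∑ j, f j = f i + ∑ j : {x : V // x ≠ i}, f j := by
  rw [← Finset.sum_subtype (Finset.univ.erase i) (by simp) f,
    Finset.add_sum_erase _ f (Finset.mem_univ i)]

lemma diag_pos {V : Type*} [Fintype V] [DecidableEq V] {Ω : Matrix V V ℝ}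
    (hΩ : Ω.PosSemidef) (hsym : Ω.IsSymm) {i i₁ : V} (hw1 : Ω i i₁ ≠ 0) : 0 < Ω i i := by
  have hA := hΩ.submatrix ![i, i₁]
  have hnn : (0:ℝ) ≤ Ω i i := by
    have := hA.dotProduct_mulVec_nonneg ![1, 0]
    simpa [dotProduct, Matrix.mulVec, Fin.sum_univ_two] using this
  rcases hnn.lt_or_eq with h | h
  · exact h
  · exfalso
    set t : ℝ := -(Ω i₁ i₁ + 1) / (2 * Ω i i₁) with ht
    have hq := hA.dotProduct_mulVec_nonneg ![t, 1]
    have hsym' : Ω i₁ i = Ω i i₁ := hsym.apply i i₁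
    simp only [dotProduct, Matrix.mulVec, Fin.sum_univ_two, star_trivial,
      Matrix.submatrix_apply, Matrix.cons_val_zero, Matrix.cons_val_one, Matrix.head_cons] at hq
    rw [← h, hsym', ht] at hq
    have hkey : -(Ω i₁ i₁ + 1) / (2 * Ω i i₁) * (0 * (-(Ω i₁ i₁ + 1) / (2 * Ω i i₁)) + Ω i i₁ * 1) +
      1 * (Ω i i₁ * (-(Ω i₁ i₁ + 1) / (2 * Ω i i₁)) + Ω i₁ i₁ * 1) = -1 := by
      field_simp
      ring
    rw [hkey] at hq
    linarith

lemma schur_psd {V : Type*} [Fintype V] [DecidableEq V] (Ω : Matrix V V ℝ)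
    (hΩ : Ω.PosSemidef) (hsym : Ω.IsSymm) (i : V) (wpos : 0 < Ω i i) :
    (Matrix.of fun j k : {x : V // x ≠ i} =>
      Ω j k - Ω (j : V) i * Ω i k / Ω i i).PosSemidef := by
  have wne : Ω i i ≠ 0 := wpos.ne'
  refine Matrix.PosSemidef.of_dotProduct_mulVec_nonneg ?_ ?_
  · ext j k
    simp only [Matrix.conjTranspose_apply, Matrix.of_apply, star_trivial]
    rw [hsym.apply (k:V) (j:V), hsym.apply (k:V) i, hsym.apply i (j:V)]
    ring
  · intro x
    set s : ℝ := ∑ k : {x : V // x ≠ i}, Ω i k * x k with hs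
    set y : V → ℝ := fun j => if h : j = i then -s / Ω i i else x ⟨j, h⟩ with hydef
    have hy : ∀ k : {x : V // x ≠ i}, y k = x k := fun k => dif_neg k.2
    have hyi : y i = -s / Ω i i := dif_pos rfl
    set D : ℝ := ∑ a : {x : V // x ≠ i}, x a * ∑ b : {x : V // x ≠ i}, Ω a b * x b with hD
    have hsymsum : ∑ a : {x : V // x ≠ i}, x a * Ω a i = s := by
      rw [hs]
      refine Finset.sum_congr rfl fun a _ => ?_
      rw [hsym.apply i (a:V)]; ring
    have hxS : dotProduct (star x) ((Matrix.of fun j k : {x : V // x ≠ i} =>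
        Ω j k - Ω (j : V) i * Ω i k / Ω i i).mulVec x) = D - s * s / Ω i i := by
      simp only [star_trivial, dotProduct, Matrix.mulVec, Matrix.of_apply]
      have inner : ∀ a : {x : V // x ≠ i},
          ∑ b : {x : V // x ≠ i}, (Ω a b - Ω (a:V) i * Ω i b / Ω i i) * x b
          = (∑ b : {x : V // x ≠ i}, Ω a b * x b) - Ω (a:V) i / Ω i i * s := by
        intro a
        simp only [sub_mul]
        rw [Finset.sum_sub_distrib]
        congr 1
        rw [hs, Finset.mul_sum]
        exact Finset.sum_congr rfl fun b _ => by ring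
      calc ∑ a : {x : V // x ≠ i}, x a * ∑ b : {x : V // x ≠ i},
              (Ω a b - Ω (a:V) i * Ω i b / Ω i i) * x b
          = ∑ a : {x : V // x ≠ i}, (x a * ∑ b : {x : V // x ≠ i}, Ω a b * x b
              - x a * Ω (a:V) i * s / Ω i i) := by
            refine Finset.sum_congr rfl fun a _ => ?_
            rw [inner a]; ring
        _ = D - (∑ a : {x : V // x ≠ i}, x a * Ω (a:V) i) * s / Ω i i := by
            rw [Finset.sum_sub_distrib, hD, Finset.sum_mul, Finset.sum_div]
        _ = D - s * s / Ω i i := by rw [hsymsum]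
    have hyΩ : dotProduct (star y) (Ω.mulVec y) = D - s * s / Ω i i := by
      simp only [star_trivial, dotProduct, Matrix.mulVec]
      have hin : ∀ j : V, ∑ k, Ω j k * y k
          = Ω j i * (-s / Ω i i) + ∑ k : {x : V // x ≠ i}, Ω j k * x k := by
        intro j
        rw [sum_split i (fun k => Ω j k * y k), hyi]
        congr 1
        exact Finset.sum_congr rfl fun k _ => by rw [hy k]
      rw [sum_split i (fun j => y j * ∑ k, Ω j k * y k), hyi, hin i, ← hs]
      have hfirst : -s / Ω i i * (Ω i i * (-s / Ω i i) + s) = 0 := by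
        field_simp
        ring
      rw [hfirst, zero_add]
      calc ∑ j : {x : V // x ≠ i}, y j * ∑ k, Ω (j:V) k * y k
          = ∑ j : {x : V // x ≠ i}, (x j * Ω (j:V) i * (-s / Ω i i)
              + x j * ∑ k : {x : V // x ≠ i}, Ω j k * x k) := by
            refine Finset.sum_congr rfl fun j _ => ?_
            rw [hy j, hin j]; ring
        _ = (∑ j : {x : V // x ≠ i}, x j * Ω (j:V) i) * (-s / Ω i i) + D := by
            rw [Finset.sum_add_distrib, Finset.sum_mul]
        _ = D - s * s / Ω i i := by rw [hsymsum]; field_simp; ring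
    rw [hxS, ← hyΩ]
    exact hΩ.dotProduct_mulVec_nonneg y

/-- Contracting a 2-node: if `i` is a 2-node of a psd stressed framework with stressed neighbors
`i₁, i₂`, then `p_i ∈ span{p_{i₁}, p_{i₂}}` (so the span of the configuration is unchanged upon
removing `i`); moreover, if the support graph of `Ω` is not the complete graph on `{i, i₁, i₂}`,
the Schur complement of `Ω` at the `(i,i)`-entry is a nonzero psd stress matrix of the
contracted framework `(H/i, p₋ᵢ)`. -/
theorem contract_two_node {V : Type*} [Fintype V] [DecidableEq V]
    (H : SimpleGraph V) (m : ℕ)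
    (p : V → EuclideanSpace ℝ (Fin m)) (Ω : Matrix V V ℝ)
    (hΩ : Ω.PosSemidef) (hstress : IsStressMatrix H p Ω)
    (i i₁ i₂ : V) (h1 : i₁ ≠ i) (h2 : i₂ ≠ i) (h12 : i₁ ≠ i₂)
    (ha1 : H.Adj i i₁) (ha2 : H.Adj i i₂)
    (hw1 : Ω i i₁ ≠ 0) (hw2 : Ω i i₂ ≠ 0)
    (h2node : ∀ j, j ≠ i → j ≠ i₁ → j ≠ i₂ → Ω i j = 0) :
    p i ∈ Submodule.span ℝ ({p i₁, p i₂} : Set (EuclideanSpace ℝ (Fin m))) ∧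
    Module.finrank ℝ ↥(Submodule.span ℝ (Set.range p)) =
      Module.finrank ℝ ↥(Submodule.span ℝ (p '' {x | x ≠ i})) ∧
    ((¬ ∀ j k, j ≠ k →
        (Ω j k ≠ 0 ↔ j ∈ ({i, i₁, i₂} : Set V) ∧ k ∈ ({i, i₁, i₂} : Set V))) →
      (Matrix.PosSemidef
          (Matrix.of fun j k : {x : V // x ≠ i} =>
            Ω j k - Ω (j : V) i * Ω i k / Ω i i) ∧
        IsStressMatrix (contractNode H i i₁ i₂) (fun x : {x : V // x ≠ i} => p x)
          (Matrix.of fun j k : {x : V // x ≠ i} =>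
            Ω j k - Ω (j : V) i * Ω i k / Ω i i))) := by
  obtain ⟨hsym, -, hsupp, heq⟩ := hstress
  have wpos : 0 < Ω i i := diag_pos hΩ hsym hw1
  have wne : Ω i i ≠ 0 := wpos.ne'
  -- Part 1
  have hpi : p i ∈ Submodule.span ℝ ({p i₁, p i₂} : Set (EuclideanSpace ℝ (Fin m))) := by
    have h0 : Ω i i • p i + (Ω i i₁ • p i₁ + Ω i i₂ • p i₂) = 0 := by
      have hsum : ∑ j, Ω i j • p j = ∑ j ∈ ({i, i₁, i₂} : Finset V), Ω i j • p j := by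
        refine (Finset.sum_subset (Finset.subset_univ _) fun j _ hj => ?_).symm
        simp only [Finset.mem_insert, Finset.mem_singleton, not_or] at hj
        rw [h2node j hj.1 hj.2.1 hj.2.2, zero_smul]
      rw [Finset.sum_insert (by simp [h1.symm, h2.symm]),
        Finset.sum_insert (by simp [h12]), Finset.sum_singleton] at hsum
      rw [← hsum]; exact heq i
    rw [Submodule.mem_span_pair]
    refine ⟨-(Ω i i₁) / Ω i i, -(Ω i i₂) / Ω i i, ?_⟩
    have h3 : Ω i i • p i = -(Ω i i₁ • p i₁ + Ω i i₂ • p i₂) := eq_neg_of_add_eq_zero_left h0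
    have h4 : p i = (Ω i i)⁻¹ • (Ω i i • p i) := (inv_smul_smul₀ wne _).symm
    rw [h4, h3]
    match_scalars <;> field_simp
  refine ⟨hpi, ?_, ?_⟩
  -- Part 2
  · have hspan : Submodule.span ℝ (Set.range p) = Submodule.span ℝ (p '' {x | x ≠ i}) := by
      refine le_antisymm (Submodule.span_le.2 ?_)
        (Submodule.span_mono (Set.image_subset_range _ _))
      rintro _ ⟨j, rfl⟩
      by_cases hj : j = i
      · subst hj
        refine Submodule.span_mono ?_ hpi
        rintro v (rfl | rfl)
        · exact ⟨i₁, h1, rfl⟩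
        · exact ⟨i₂, h2, rfl⟩
      · exact Submodule.subset_span ⟨j, hj, rfl⟩
    rw [hspan]
  -- Part 3
  · intro hne
    have hSpsd := schur_psd Ω hΩ hsym i wpos
    refine ⟨hSpsd, ?_, ?_, ?_, ?_⟩
    -- symmetry
    · refine Matrix.IsSymm.ext fun j k => ?_
      simp only [Matrix.of_apply]
      rw [hsym.apply (k:V) (j:V), hsym.apply (k:V) i, hsym.apply i (j:V)]
      ring
    -- nonzero
    · intro hS0
      apply hne
      have hent : ∀ (j k : V) (hj : j ≠ i) (hk : k ≠ i),
          Ω j k = Ω j i * Ω i k / Ω i i := by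
        intro j k hj hk
        have := congrFun (congrFun hS0 ⟨j, hj⟩) ⟨k, hk⟩
        simpa [sub_eq_zero] using this
      have hrow : ∀ a b : V, a ≠ i → a ≠ i₁ → a ≠ i₂ → Ω a b = 0 := by
        intro a b hai ha1 ha2
        by_cases hb : b = i
        · rw [hb, hsym.apply i a]; exact h2node a hai ha1 ha2
        · rw [hent a b hai hb, hsym.apply i a, h2node a hai ha1 ha2]
          simp
      have hcol : ∀ a b : V, b ≠ i → b ≠ i₁ → b ≠ i₂ → Ω a b = 0 := by
        intro a b hbi hb1 hb2
        rw [← hsym.apply a b]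
        exact hrow b a hbi hb1 hb2
      intro j k hjk
      constructor
      · intro hne0
        constructor
        · by_contra hj
          simp only [Set.mem_insert_iff, Set.mem_singleton_iff, not_or] at hj
          exact hne0 (hrow j k hj.1 hj.2.1 hj.2.2)
        · by_contra hk
          simp only [Set.mem_insert_iff, Set.mem_singleton_iff, not_or] at hk
          exact hne0 (hcol j k hk.1 hk.2.1 hk.2.2)
      · rintro ⟨hj, hk⟩
        have h1i2 : Ω i₁ i₂ ≠ 0 := by
          rw [hent i₁ i₂ h1 h2]
          apply div_ne_zero _ wne
          apply mul_ne_zero _ hw2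
          rw [hsym.apply i i₁]; exact hw1
        simp only [Set.mem_insert_iff, Set.mem_singleton_iff] at hj hk
        rcases hj with hj | hj | hj
        · rcases hk with hk | hk | hk
          · exact absurd (hj.trans hk.symm) hjk
          · rw [hj, hk]; exact hw1
          · rw [hj, hk]; exact hw2
        · rcases hk with hk | hk | hk
          · rw [hj, hk, hsym.apply i i₁]; exact hw1
          · exact absurd (hj.trans hk.symm) hjk
          · rw [hj, hk]; exact h1i2
        · rcases hk with hk | hk | hk
          · rw [hj, hk, hsym.apply i i₂]; exact hw2
          · rw [hj, hk, hsym.apply i₁ i₂]; exact h1i2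
          · exact absurd (hj.trans hk.symm) hjk
    -- support
    · intro a b hab hadj
      rw [contractNode, SimpleGraph.fromRel_adj] at hadj
      push_neg at hadj
      obtain ⟨⟨hHab, ha12⟩, hHba, hb12⟩ := hadj hab
      have hab' : (a : V) ≠ (b : V) := Subtype.coe_injective.ne hab
      have hΩab : Ω a b = 0 := hsupp _ _ hab' hHab
      have hprod : Ω (a : V) i * Ω i b = 0 := by
        by_cases hA1 : (a : V) = i₁
        · by_cases hB2 : (b : V) = i₂
          · exact absurd hB2 (ha12 hA1)
          · by_cases hB1 : (b : V) = i₁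
            · exact absurd (hA1.trans hB1.symm) hab'
            · rw [h2node b b.2 hB1 hB2, mul_zero]
        · by_cases hA2 : (a : V) = i₂
          · by_cases hB1 : (b : V) = i₁
            · exact absurd hA2 (hb12 hB1)
            · by_cases hB2 : (b : V) = i₂
              · exact absurd (hA2.trans hB2.symm) hab'
              · rw [h2node b b.2 hB1 hB2, mul_zero]
          · rw [hsym.apply i (a:V), h2node a a.2 hA1 hA2, zero_mul]
      simp only [Matrix.of_apply, hΩab, hprod, zero_div, sub_zero]
    -- equilibrium
    · intro j
      have hA' : ∑ k : {x : V // x ≠ i}, Ω (j:V) k • p k = -(Ω (j:V) i • p i) := by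
        have h := heq (j:V)
        rw [sum_split i (fun k => Ω (j:V) k • p k)] at h
        exact eq_neg_of_add_eq_zero_right h
      have hB' : ∑ k : {x : V // x ≠ i}, Ω i k • p k = -(Ω i i • p i) := by
        have h := heq i
        rw [sum_split i (fun k => Ω i k • p k)] at h
        exact eq_neg_of_add_eq_zero_right h
      calc ∑ k : {x : V // x ≠ i},
              (Matrix.of fun j k : {x : V // x ≠ i} =>
                Ω j k - Ω (j : V) i * Ω i k / Ω i i) j k • p k
          = ∑ k : {x : V // x ≠ i},
              (Ω (j:V) k • p (k:V) - (Ω (j:V) i / Ω i i) • (Ω i k • p (k:V))) := by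
            refine Finset.sum_congr rfl fun k _ => ?_
            simp only [Matrix.of_apply]
            rw [sub_smul, smul_smul]
            congr 2
            ring
        _ = (∑ k : {x : V // x ≠ i}, Ω (j:V) k • p k)
            - (Ω (j:V) i / Ω i i) • ∑ k : {x : V // x ≠ i}, Ω i k • p k := by
            rw [Finset.sum_sub_distrib, Finset.smul_sum]
        _ = 0 := by
            rw [hA', hB', smul_neg, smul_smul, div_mul_cancel₀ _ wne]
            simp
end

section
/- Let G = ([n], E) be a graph, e₀ = (i₀, j₀) a non-edge, and a ∈ S_{++}(G) a G-partial matrix admitting a positive definite completion. Then there exist a Gram realization p = (p₁,...,p_n) of (G, a) in some R^k and a psd matrix Ω = (w_{ij}) ∈ S^n_+ such that: w_{i₀j₀} ≠ 0; w_{ij} = 0 for all pairs ij ∉ V ∪ E ∪ {e₀}; the equilibrium condition w_{ii}p_i + Σ_{j: ij ∈ E∪{e₀}} w_{ij}p_j = 0 holds at every node i; and dim span{p_i, p_j} = 2 for every edge ij ∈ E. -/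
open Matrix

open scoped MatrixOrder in
lemma aux_psd_factor {V : Type*} [Fintype V] [DecidableEq V] {X : Matrix V V ℝ}
    (h : X.PosSemidef) : ∃ B : Matrix V V ℝ, X = Bᴴ * B := by
  obtain ⟨B, hB⟩ := CStarAlgebra.nonneg_iff_eq_star_mul_self.mp h.nonneg
  exact ⟨B, by simpa [star_eq_conjTranspose] using hB⟩

attribute [local instance] Matrix.normedAddCommGroup Matrix.normedSpace

section Aux

variable {V : Type*} [Fintype V] [DecidableEq V]

/-- quadratic form bound by sup norm -/
lemma aux_abs_quad_le (Z : Matrix V V ℝ) (u : V → ℝ) (hu : ∀ i, |u i| ≤ 1) :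
    |u ⬝ᵥ Z *ᵥ u| ≤ ‖Z‖ * (Fintype.card V : ℝ) ^ 2 := by
  have hZ : ∀ i j, |Z i j| ≤ ‖Z‖ := fun i j => Z.norm_entry_le_entrywise_sup_norm
  have h0 : (0:ℝ) ≤ ‖Z‖ := norm_nonneg _
  calc |u ⬝ᵥ Z *ᵥ u| = |∑ i, u i * ∑ j, Z i j * u j| := by
        simp [dotProduct, mulVec]
    _ ≤ ∑ i, |u i * ∑ j, Z i j * u j| := Finset.abs_sum_le_sum_abs _ _
    _ ≤ ∑ i : V, (Fintype.card V : ℝ) * ‖Z‖ := by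
        refine Finset.sum_le_sum fun i _ => ?_
        rw [abs_mul]
        calc |u i| * |∑ j, Z i j * u j| ≤ 1 * ∑ j, |Z i j * u j| := by
              refine mul_le_mul (hu i) (Finset.abs_sum_le_sum_abs _ _) (abs_nonneg _) zero_le_one
          _ = ∑ j, |Z i j * u j| := one_mul _
          _ ≤ ∑ j : V, ‖Z‖ := by
              refine Finset.sum_le_sum fun j _ => ?_
              rw [abs_mul]
              calc |Z i j| * |u j| ≤ ‖Z‖ * 1 := mul_le_mul (hZ i j) (hu j) (abs_nonneg _) h0
                _ = ‖Z‖ := mul_one _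
          _ = (Fintype.card V : ℝ) * ‖Z‖ := by simp [Finset.card_univ, mul_comm]
    _ = (Fintype.card V : ℝ) * ((Fintype.card V : ℝ) * ‖Z‖) := by simp [Finset.card_univ]
    _ = ‖Z‖ * (Fintype.card V : ℝ) ^ 2 := by ring

lemma aux_quad_smul (X : Matrix V V ℝ) (c : ℝ) (v : V → ℝ) :
    (c • v) ⬝ᵥ X *ᵥ (c • v) = c ^ 2 * (v ⬝ᵥ X *ᵥ v) := by
  rw [mulVec_smul, smul_dotProduct, dotProduct_smul]
  simp [smul_eq_mul]; ring

/-- the set of matrices with strictly positive quadratic form is open -/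
lemma aux_isOpen_posQuad [Nonempty V] :
    IsOpen {X : Matrix V V ℝ | ∀ v : V → ℝ, v ≠ 0 → 0 < v ⬝ᵥ X *ᵥ v} := by
  refine Metric.isOpen_iff.mpr ?_
  intro X hX
  have hcont : Continuous fun v : V → ℝ => v ⬝ᵥ X *ᵥ v := by
    simp only [dotProduct, mulVec]; fun_prop
  have hSne : (Metric.sphere (0 : V → ℝ) 1).Nonempty :=
    NormedSpace.sphere_nonempty.mpr zero_le_one
  obtain ⟨v₀, hv₀S, hmin⟩ :=
    (isCompact_sphere (0 : V → ℝ) 1).exists_isMinOn hSne hcont.continuousOn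
  have hv₀norm : ‖v₀‖ = 1 := by simpa using hv₀S
  have hv₀ne : v₀ ≠ 0 := by
    intro h; rw [h] at hv₀norm; simp at hv₀norm
  set lam : ℝ := v₀ ⬝ᵥ X *ᵥ v₀ with hlam
  have hlampos : 0 < lam := hX v₀ hv₀ne
  set n : ℝ := (Fintype.card V : ℝ) with hn
  have hn0 : (0:ℝ) ≤ n ^ 2 := sq_nonneg _
  refine ⟨lam / (n ^ 2 + 1), by positivity, ?_⟩
  intro Y hY
  intro v hv
  have hdist : ‖Y - X‖ < lam / (n ^ 2 + 1) := by
    rw [← dist_eq_norm]; exact hY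
  set u : V → ℝ := ‖v‖⁻¹ • v with hu
  have hvn : ‖v‖ ≠ 0 := norm_ne_zero_iff.mpr hv
  have hunorm : ‖u‖ = 1 := by
    rw [hu, norm_smul, norm_inv, norm_norm, inv_mul_cancel₀ hvn]
  have huS : u ∈ Metric.sphere (0 : V → ℝ) 1 := by simpa using hunorm
  have hui : ∀ i, |u i| ≤ 1 := by
    intro i
    calc |u i| = ‖u i‖ := rfl
      _ ≤ ‖u‖ := norm_le_pi_norm u i
      _ = 1 := hunorm
  have hbound : |u ⬝ᵥ (Y - X) *ᵥ u| ≤ ‖Y - X‖ * n ^ 2 := aux_abs_quad_le _ _ hui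
  have hXu : lam ≤ u ⬝ᵥ X *ᵥ u := hmin huS
  have hsplit : u ⬝ᵥ Y *ᵥ u = u ⬝ᵥ X *ᵥ u + u ⬝ᵥ (Y - X) *ᵥ u := by
    rw [sub_mulVec, dotProduct_sub]; ring
  have hYu : 0 < u ⬝ᵥ Y *ᵥ u := by
    have h1 : ‖Y - X‖ * n ^ 2 < lam := by
      calc ‖Y - X‖ * n ^ 2 ≤ lam / (n ^ 2 + 1) * n ^ 2 := by
            apply mul_le_mul_of_nonneg_right hdist.le hn0
        _ < lam := by
            rw [div_mul_eq_mul_div, div_lt_iff₀ (by positivity)]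
            nlinarith
    have h2 : -( ‖Y - X‖ * n ^ 2) ≤ u ⬝ᵥ (Y - X) *ᵥ u := neg_le_of_abs_le hbound |>.trans_eq rfl
    rw [hsplit]; linarith
  have : v = ‖v‖ • u := by rw [hu, smul_smul, mul_inv_cancel₀ hvn, one_smul]
  rw [this, aux_quad_smul]
  have : (0:ℝ) < ‖v‖ ^ 2 := by positivity
  exact mul_pos this hYu

lemma aux_convex_posQuad :
    Convex ℝ {X : Matrix V V ℝ | ∀ v : V → ℝ, v ≠ 0 → 0 < v ⬝ᵥ X *ᵥ v} := by
  intro X hX Y hY a b ha hb hab v hv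
  have hX' := hX v hv
  have hY' := hY v hv
  have : v ⬝ᵥ (a • X + b • Y) *ᵥ v = a * (v ⬝ᵥ X *ᵥ v) + b * (v ⬝ᵥ Y *ᵥ v) := by
    rw [add_mulVec, dotProduct_add, smul_mulVec, smul_mulVec,
      dotProduct_smul, dotProduct_smul]
    simp [smul_eq_mul]
  rw [Set.mem_setOf_eq] at *
  rw [this]
  rcases ha.eq_or_lt with h | h
  · have hb1 : b = 1 := by linarith
    simp [← h, hb1, hY']
  · exact add_pos_of_pos_of_nonneg (mul_pos h hX') (mul_nonneg hb hY'.le)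

end Aux

section Aux2

variable {V : Type*} [Fintype V] [DecidableEq V]

lemma aux_quad_continuousX (v : V → ℝ) :
    Continuous fun X : Matrix V V ℝ => v ⬝ᵥ X *ᵥ v := by
  simp only [dotProduct, mulVec]; fun_prop

lemma aux_entry_continuous (i j : V) :
    Continuous fun X : Matrix V V ℝ => X i j :=
  (continuous_apply j).comp (continuous_apply i)

lemma aux_isClosed_C (G : SimpleGraph V) (A : Matrix V V ℝ) :
    IsClosed {X : Matrix V V ℝ | X.PosSemidef ∧ (∀ i, X i i = A i i) ∧
      ∀ i j, G.Adj i j → X i j = A i j} := by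
  have h1 : IsClosed {X : Matrix V V ℝ | Xᴴ = X} :=
    isClosed_eq (Continuous.matrix_conjTranspose continuous_id) continuous_id
  have h2 : IsClosed {X : Matrix V V ℝ | ∀ x : V → ℝ, 0 ≤ star x ⬝ᵥ X *ᵥ x} := by
    have : {X : Matrix V V ℝ | ∀ x : V → ℝ, 0 ≤ star x ⬝ᵥ X *ᵥ x} =
        ⋂ x : V → ℝ, {X | 0 ≤ star x ⬝ᵥ X *ᵥ x} := by
      ext X; simp
    rw [this]
    exact isClosed_iInter fun x => isClosed_le continuous_const (aux_quad_continuousX _)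
  have h3 : IsClosed {X : Matrix V V ℝ | ∀ i, X i i = A i i} := by
    have : {X : Matrix V V ℝ | ∀ i, X i i = A i i} = ⋂ i, {X | X i i = A i i} := by
      ext X; simp
    rw [this]
    exact isClosed_iInter fun i => isClosed_eq (aux_entry_continuous i i) continuous_const
  have h4 : IsClosed {X : Matrix V V ℝ | ∀ i j, G.Adj i j → X i j = A i j} := by
    have : {X : Matrix V V ℝ | ∀ i j, G.Adj i j → X i j = A i j} =
        ⋂ i, ⋂ j, {X | G.Adj i j → X i j = A i j} := by
      ext X; simp
    rw [this]
    refine isClosed_iInter fun i => isClosed_iInter fun j => ?_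
    by_cases h : G.Adj i j
    · have : {X : Matrix V V ℝ | G.Adj i j → X i j = A i j} = {X | X i j = A i j} := by
        ext X; simp [h]
      rw [this]
      exact isClosed_eq (aux_entry_continuous i j) continuous_const
    · have : {X : Matrix V V ℝ | G.Adj i j → X i j = A i j} = Set.univ := by
        ext X; simp [h]
      rw [this]; exact isClosed_univ
  have : {X : Matrix V V ℝ | X.PosSemidef ∧ (∀ i, X i i = A i i) ∧
      ∀ i j, G.Adj i j → X i j = A i j} =
      ({X : Matrix V V ℝ | Xᴴ = X} ∩ {X | ∀ x : V → ℝ, 0 ≤ star x ⬝ᵥ X *ᵥ x}) ∩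
      ({X : Matrix V V ℝ | ∀ i, X i i = A i i} ∩ {X | ∀ i j, G.Adj i j → X i j = A i j}) := by
    ext X
    simp only [Set.mem_setOf_eq, Set.mem_inter_iff]
    constructor
    · rintro ⟨hP, hd, he⟩; exact ⟨posSemidef_iff_dotProduct_mulVec.mp hP, hd, he⟩
    · rintro ⟨hP, hd, he⟩; exact ⟨posSemidef_iff_dotProduct_mulVec.mpr hP, hd, he⟩
  rw [this]
  exact (h1.inter h2).inter (h3.inter h4)

end Aux2

section Aux3

variable {V : Type*} [Fintype V] [DecidableEq V]

lemma aux_single_quad (X : Matrix V V ℝ) (i j : V) (s c : ℝ) :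
    (s • (Pi.single i 1 : V → ℝ) + c • (Pi.single j 1 : V → ℝ)) ⬝ᵥ
        X *ᵥ (s • (Pi.single i 1 : V → ℝ) + c • (Pi.single j 1 : V → ℝ))
      = s ^ 2 * X i i + s * c * X i j + s * c * X j i + c ^ 2 * X j j := by
  rw [mulVec_add, mulVec_smul, mulVec_smul, mulVec_single, mulVec_single, add_dotProduct,
    smul_dotProduct, smul_dotProduct]
  simp only [dotProduct_add, dotProduct_smul, smul_eq_mul, mul_one]
  have h1 : ∀ w : V → ℝ, (Pi.single i 1 : V → ℝ) ⬝ᵥ w = w i := fun w => by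
    rw [single_dotProduct, one_mul]
  have h2 : ∀ w : V → ℝ, (Pi.single j 1 : V → ℝ) ⬝ᵥ w = w j := fun w => by
    rw [single_dotProduct, one_mul]
  rw [h1, h1, h2, h2]
  simp only [Pi.smul_apply, MulOpposite.op_one, one_smul, Matrix.col_apply]
  ring

lemma aux_entry_bound {X : Matrix V V ℝ} (hX : X.PosSemidef) {R : ℝ}
    (hdiag : ∀ i, 0 ≤ X i i) (hR : ∀ i, X i i ≤ R) (i j : V) : |X i j| ≤ R := by
  have hsymm : ∀ a b, X b a = X a b := fun a b => by
    have := congrFun (congrFun hX.1 a) b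
    simpa [conjTranspose_apply] using this
  by_cases hij : i = j
  · subst hij
    rw [abs_of_nonneg (hdiag i)]; exact hR i
  · have key : ∀ c : ℝ, 0 ≤ X i i + c * X i j + c * X j i + c ^ 2 * X j j := by
      intro c
      have := hX.dotProduct_mulVec_nonneg ((1:ℝ) • (Pi.single i 1 : V → ℝ) + c • (Pi.single j 1 : V → ℝ))
      rw [show star ((1:ℝ) • (Pi.single i 1 : V → ℝ) + c • (Pi.single j 1 : V → ℝ)) =
        (1:ℝ) • (Pi.single i 1 : V → ℝ) + c • (Pi.single j 1 : V → ℝ) from by simp] at this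
      rw [aux_single_quad] at this
      simpa using this
    have k1 := key 1
    have k2 := key (-1)
    have hji := hsymm i j
    rw [abs_le]
    constructor <;> nlinarith [hR i, hR j]

lemma aux_compact_C (G : SimpleGraph V) (A : Matrix V V ℝ)
    (hApos : ∀ i, 0 < A i i) :
    IsCompact {X : Matrix V V ℝ | X.PosSemidef ∧ (∀ i, X i i = A i i) ∧
      ∀ i j, G.Adj i j → X i j = A i j} := by
  set R : ℝ := ∑ i, A i i with hRdef
  have hR0 : 0 ≤ R := Finset.sum_nonneg fun i _ => (hApos i).le
  have hAleR : ∀ i, A i i ≤ R := fun i =>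
    Finset.single_le_sum (fun k _ => (hApos k).le) (Finset.mem_univ i)
  apply IsCompact.of_isClosed_subset (isCompact_closedBall (0 : Matrix V V ℝ) R)
    (aux_isClosed_C G A)
  intro X hXC
  rw [Metric.mem_closedBall, dist_zero_right]
  rw [Matrix.norm_le_iff hR0]
  intro i j
  rw [Real.norm_eq_abs]
  exact aux_entry_bound hXC.1 (fun k => by rw [hXC.2.1 k]; exact (hApos k).le)
    (fun k => by rw [hXC.2.1 k]; exact hAleR k) i j

end Aux3

section Aux4

variable {V : Type*} [Fintype V] [DecidableEq V]

/-- symmetrized elementary matrix -/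
def auxEsym (a b : V) : Matrix V V ℝ := Matrix.single a b 1 + Matrix.single b a 1

lemma auxEsym_apply (a b i j : V) :
    auxEsym a b i j = (if a = i ∧ b = j then (1:ℝ) else 0) + (if b = i ∧ a = j then 1 else 0) := by
  simp [auxEsym, Matrix.single, Matrix.add_apply]

lemma auxEsym_transpose (a b : V) : (auxEsym a b)ᵀ = auxEsym a b := by
  ext i j
  simp only [Matrix.transpose_apply, auxEsym_apply]
  rw [add_comm]
  congr 1 <;> exact if_congr and_comm rfl rfl

lemma aux_vvT_posSemidef (x : V → ℝ) :
    (Matrix.of fun a b => x a * x b : Matrix V V ℝ).PosSemidef := by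
  apply Matrix.PosSemidef.of_dotProduct_mulVec_nonneg
  · ext a b
    simp [Matrix.conjTranspose_apply, Matrix.of_apply, mul_comm]
  · intro w
    have hkey : star w ⬝ᵥ (Matrix.of fun a b => x a * x b : Matrix V V ℝ) *ᵥ w
        = (∑ a, x a * w a) ^ 2 := by
      simp only [star_trivial, dotProduct, mulVec, Matrix.of_apply]
      have h1 : ∀ a, ∑ b, x a * x b * w b = x a * ∑ b, x b * w b := fun a => by
        rw [Finset.mul_sum]
        exact Finset.sum_congr rfl fun b _ => by ring
      calc ∑ a, w a * ∑ b, x a * x b * w b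
          = ∑ a, (x a * w a) * ∑ b, x b * w b := by
            refine Finset.sum_congr rfl fun a _ => ?_
            rw [h1]; ring
        _ = (∑ a, x a * w a) * (∑ b, x b * w b) := by rw [← Finset.sum_mul]
        _ = (∑ a, x a * w a) ^ 2 := by rw [sq]
    rw [hkey]
    positivity

lemma aux_quad_as_sum (Ω : Matrix V V ℝ) (x : V → ℝ) :
    x ⬝ᵥ Ω *ᵥ x = ∑ i, ∑ j, Ω i j * (x i * x j) := by
  simp only [dotProduct, mulVec, Finset.mul_sum]
  exact Finset.sum_congr rfl fun i _ => Finset.sum_congr rfl fun j _ => by ring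

lemma aux_factor_zero (M N : Matrix V V ℝ)
    (h : ∑ i, ∑ j, (Nᵀ * N) i j * (Mᵀ * M) i j = 0) : M * (Nᵀ * N) = 0 := by
  have h1 : trace ((N * Mᵀ)ᵀ * (N * Mᵀ)) = ∑ i, ∑ j, (N * Mᵀ) j i ^ 2 := by
    simp only [Matrix.trace, Matrix.diag, Matrix.mul_apply, Matrix.transpose_apply, sq]
  have h2 : (N * Mᵀ)ᵀ * (N * Mᵀ) = M * (Nᵀ * N) * Mᵀ := by
    rw [transpose_mul, transpose_transpose]
    simp [Matrix.mul_assoc]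
  have h3 : trace (M * (Nᵀ * N) * Mᵀ) = trace (Mᵀ * M * (Nᵀ * N)) :=
    trace_mul_cycle M (Nᵀ * N) Mᵀ
  have hMsym : ∀ a b, (Mᵀ * M) a b = (Mᵀ * M) b a := fun a b => by
    simp only [Matrix.mul_apply, Matrix.transpose_apply]
    exact Finset.sum_congr rfl fun k _ => by ring
  have h4 : trace (Mᵀ * M * (Nᵀ * N)) = ∑ i, ∑ j, (Nᵀ * N) i j * (Mᵀ * M) i j := by
    have : trace (Mᵀ * M * (Nᵀ * N)) = ∑ i, ∑ j, (Mᵀ * M) i j * (Nᵀ * N) j i := by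
      simp [Matrix.trace, Matrix.diag, Matrix.mul_apply, Finset.mul_sum]
    rw [this]
    rw [Finset.sum_comm]
    refine Finset.sum_congr rfl fun j _ => Finset.sum_congr rfl fun i _ => ?_
    rw [hMsym i j]; ring
  have h5 : ∑ i, ∑ j, (N * Mᵀ) j i ^ 2 = 0 := by
    rw [← h1, h2, h3, h4, h]
  have hC : N * Mᵀ = 0 := by
    ext a b
    have houter := (Finset.sum_eq_zero_iff_of_nonneg (fun i _ =>
      Finset.sum_nonneg fun j _ => sq_nonneg ((N * Mᵀ) j i))).mp h5 b (Finset.mem_univ b)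
    have hinner := (Finset.sum_eq_zero_iff_of_nonneg (fun j _ =>
      sq_nonneg ((N * Mᵀ) j b))).mp houter a (Finset.mem_univ a)
    simpa using pow_eq_zero_iff (n := 2) (by norm_num) |>.mp hinner
  have : M * Nᵀ = (N * Mᵀ)ᵀ := by rw [transpose_mul, transpose_transpose]
  rw [← Matrix.mul_assoc, this, hC]
  simp

end Aux4

/-- Existence of a flat Gram realization with a psd stress matrix, obtained by stretching along
a non-edge `(i₀, j₀)`: given a `G`-partial matrix `A` admitting a positive definite completion,
there is a Gram realization `p` of `(G, A)` and a psd matrix `Ω` with `Ω_{i₀j₀} ≠ 0`, supported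
on `V ∪ E ∪ {(i₀,j₀)}`, satisfying the equilibrium condition at every node, and with
`dim span{p_i, p_j} = 2` for every edge `ij` of `G`. -/
theorem exists_psd_stressed_realization {V : Type*} [Fintype V] [DecidableEq V]
    (G : SimpleGraph V) (i₀ j₀ : V) (hne : i₀ ≠ j₀) (hnadj : ¬G.Adj i₀ j₀)
    (A : Matrix V V ℝ)
    (hA : ∃ B : Matrix V V ℝ, B.PosDef ∧ (∀ i, B i i = A i i) ∧
      ∀ i j, G.Adj i j → B i j = A i j) :
    ∃ (k : ℕ) (p : V → EuclideanSpace ℝ (Fin k)) (Ω : Matrix V V ℝ),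
      Ω.PosSemidef ∧
      (∀ i, (inner ℝ (p i) (p i) : ℝ) = A i i) ∧
      (∀ i j, G.Adj i j → (inner ℝ (p i) (p j) : ℝ) = A i j) ∧
      Ω i₀ j₀ ≠ 0 ∧
      (∀ i j, i ≠ j → ¬G.Adj i j →
        ¬((i = i₀ ∧ j = j₀) ∨ (i = j₀ ∧ j = i₀)) → Ω i j = 0) ∧
      (∀ i, ∑ j, Ω i j • p j = 0) ∧
      (∀ i j, G.Adj i j →
        Module.finrank ℝ
          ↥(Submodule.span ℝ ({p i, p j} : Set (EuclideanSpace ℝ (Fin k)))) = 2) := by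
  classical
  obtain ⟨B, hBpd, hBdiag, hBedge⟩ := hA
  have hV : Nonempty V := ⟨i₀⟩
  -- positivity of diagonal
  have hApos : ∀ i, 0 < A i i := by
    intro i
    rw [← hBdiag i]
    have hs : (Pi.single i 1 : V → ℝ) ≠ 0 := by
      intro h
      have := congrFun h i
      simp at this
    have := hBpd.dotProduct_mulVec_pos hs
    simpa [mulVec_single, single_dotProduct] using this
  -- the feasible set
  set C : Set (Matrix V V ℝ) := {X | X.PosSemidef ∧ (∀ i, X i i = A i i) ∧
      ∀ i j, G.Adj i j → X i j = A i j} with hCdef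
  have hBC : B ∈ C := ⟨hBpd.posSemidef, hBdiag, hBedge⟩
  -- maximize the (i₀, j₀) entry over C
  obtain ⟨Xs, hXsC, hXsmax⟩ := (aux_compact_C G A hApos).exists_isMaxOn ⟨B, hBC⟩
    ((aux_entry_continuous i₀ j₀).continuousOn)
  have hmax : ∀ Y ∈ C, Y i₀ j₀ ≤ Xs i₀ j₀ := fun Y hY => hXsmax hY
  have hXspsd : Xs.PosSemidef := hXsC.1
  have hXssym : Xsᵀ = Xs := by
    have h' : Xsᴴ = Xs := hXspsd.1
    rwa [conjTranspose_eq_transpose_of_trivial] at h'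
  have hXsentry : ∀ a b, Xs b a = Xs a b := fun a b => congrFun (congrFun hXssym a) b
  set t : ℝ := Xs i₀ j₀ with htdef
  -- the open convex set of matrices with positive quadratic form
  set s : Set (Matrix V V ℝ) := {X | ∀ v : V → ℝ, v ≠ 0 → 0 < v ⬝ᵥ X *ᵥ v} with hsdef
  -- the affine slice
  set L : Set (Matrix V V ℝ) := {X | Xᵀ = X ∧ (∀ i, X i i = A i i) ∧
      (∀ i j, G.Adj i j → X i j = A i j) ∧ X i₀ j₀ = t} with hLdef
  have hXsL : Xs ∈ L := ⟨hXssym, hXsC.2.1, hXsC.2.2, rfl⟩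
  have hLconv : Convex ℝ L := by
    intro X hX Y hY a b ha hb hab
    refine ⟨?_, ?_, ?_, ?_⟩
    · rw [transpose_add, transpose_smul, transpose_smul, hX.1, hY.1]
    · intro i
      simp only [Matrix.add_apply, Matrix.smul_apply, smul_eq_mul]
      rw [hX.2.1 i, hY.2.1 i, ← add_mul, hab, one_mul]
    · intro i j hadj
      simp only [Matrix.add_apply, Matrix.smul_apply, smul_eq_mul]
      rw [hX.2.2.1 i j hadj, hY.2.2.1 i j hadj, ← add_mul, hab, one_mul]
    · simp only [Matrix.add_apply, Matrix.smul_apply, smul_eq_mul]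
      rw [hX.2.2.2, hY.2.2.2, ← add_mul, hab, one_mul]
  -- entries of the symmetrized elementary matrix at relevant places
  have hE₀ : auxEsym i₀ j₀ i₀ j₀ = 1 := by
    rw [auxEsym_apply]
    rw [if_pos ⟨rfl, rfl⟩, if_neg (by rintro ⟨h1, h2⟩; exact hne h2)]
    norm_num
  have hE₀diag : ∀ a, auxEsym i₀ j₀ a a = 0 := by
    intro a
    rw [auxEsym_apply, if_neg (by rintro ⟨h1, h2⟩; exact hne (h1.trans h2.symm)),
      if_neg (by rintro ⟨h1, h2⟩; exact hne (h2.trans h1.symm))]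
    norm_num
  have hE₀edge : ∀ a b, G.Adj a b → auxEsym i₀ j₀ a b = 0 := by
    intro a b hadj
    rw [auxEsym_apply, if_neg (by rintro ⟨h1, h2⟩; exact hnadj (by rw [h1, h2]; exact hadj)),
      if_neg (by
        rintro ⟨h1, h2⟩
        exact hnadj (G.adj_symm (show G.Adj j₀ i₀ from by rw [h1, h2]; exact hadj)))]
    norm_num
  have hE₀sym : (auxEsym i₀ j₀)ᵀ = auxEsym i₀ j₀ := auxEsym_transpose i₀ j₀
  -- disjointness of s and L
  have hdisj : Disjoint s L := by
    rw [Set.disjoint_left]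
    intro X hXs hXL
    obtain ⟨ε, hε, hball⟩ := Metric.isOpen_iff.mp aux_isOpen_posQuad X hXs
    set σ : ℝ := ε / (‖auxEsym i₀ j₀‖ + 1) with hσdef
    have hσ : 0 < σ := by positivity
    set Y : Matrix V V ℝ := X + σ • auxEsym i₀ j₀ with hYdef
    have hYs : Y ∈ s := by
      apply hball
      rw [Metric.mem_ball, dist_eq_norm]
      have : Y - X = σ • auxEsym i₀ j₀ := by rw [hYdef]; abel
      rw [this, norm_smul, Real.norm_eq_abs, abs_of_pos hσ]
      calc σ * ‖auxEsym i₀ j₀‖ < σ * (‖auxEsym i₀ j₀‖ + 1) := by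
            exact mul_lt_mul_of_pos_left (by linarith) hσ
        _ = ε := by rw [hσdef]; field_simp
    have hYsym : Yᵀ = Y := by
      rw [hYdef, transpose_add, transpose_smul, hXL.1, hE₀sym]
    have hYpsd : Y.PosSemidef := by
      refine PosSemidef.of_dotProduct_mulVec_nonneg ?_ ?_
      · show Yᴴ = Y
        rw [conjTranspose_eq_transpose_of_trivial, hYsym]
      · intro x
        by_cases hx : x = 0
        · simp [hx]
        · have := hYs x hx
          simpa using this.le
    have hYC : Y ∈ C := by
      refine ⟨hYpsd, ?_, ?_⟩
      · intro i
        simp only [hYdef, Matrix.add_apply, Matrix.smul_apply, smul_eq_mul]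
        rw [hXL.2.1 i, hE₀diag i, mul_zero, add_zero]
      · intro i j hadj
        simp only [hYdef, Matrix.add_apply, Matrix.smul_apply, smul_eq_mul]
        rw [hXL.2.2.1 i j hadj, hE₀edge i j hadj, mul_zero, add_zero]
    have h1 := hmax Y hYC
    have h2 : Y i₀ j₀ = t + σ := by
      simp only [hYdef, Matrix.add_apply, Matrix.smul_apply, smul_eq_mul]
      rw [hXL.2.2.2, hE₀, mul_one]
    rw [h2] at h1
    have h3 : t = Xs i₀ j₀ := htdef
    linarith
  -- separation
  obtain ⟨f, u, hfs, hfL⟩ :=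
    geometric_hahn_banach_open aux_convex_posQuad aux_isOpen_posQuad hLconv hdisj
  -- f is ≤ u on the psd cone
  have hpsd_le_u : ∀ Y : Matrix V V ℝ, Y.PosSemidef → f Y ≤ u := by
    intro Y hY
    by_contra hcon
    push_neg at hcon
    set ε : ℝ := (f Y - u) / (|f 1| + 1) with hεdef
    have hε : 0 < ε := by
      apply div_pos (by linarith) (by positivity)
    have hmem : Y + ε • (1 : Matrix V V ℝ) ∈ s := by
      intro v hv
      have hq : v ⬝ᵥ (Y + ε • (1 : Matrix V V ℝ)) *ᵥ v
          = v ⬝ᵥ Y *ᵥ v + ε * (v ⬝ᵥ v) := by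
        rw [add_mulVec, dotProduct_add, smul_mulVec, one_mulVec, dotProduct_smul,
          smul_eq_mul]
      have hvv : 0 < v ⬝ᵥ v := by
        have h0 : 0 ≤ v ⬝ᵥ v := by
          simp only [dotProduct]
          exact Finset.sum_nonneg fun i _ => mul_self_nonneg (v i)
        rcases h0.lt_or_eq with h | h
        · exact h
        · exact absurd ((dotProduct_self_eq_zero).mp h.symm) hv
      have hYv : 0 ≤ v ⬝ᵥ Y *ᵥ v := by
        have := hY.dotProduct_mulVec_nonneg v
        simpa using this
      rw [hq]
      nlinarith
    have hlt := hfs _ hmem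
    rw [map_add, _root_.map_smul, smul_eq_mul] at hlt
    have habs : -|f 1| ≤ f 1 := neg_abs_le _
    have hεeq : ε * (|f 1| + 1) = f Y - u := by
      rw [hεdef]; field_simp
    nlinarith [mul_le_mul_of_nonneg_left habs hε.le]
  have hu0 : 0 ≤ u := by
    have := hpsd_le_u 0 Matrix.PosSemidef.zero
    simpa using this
  -- f is ≤ 0 on the psd cone
  have hpsd_le : ∀ Y : Matrix V V ℝ, Y.PosSemidef → f Y ≤ 0 := by
    intro Y hY
    by_contra hcon
    push_neg at hcon
    set c : ℝ := (u + 1) / f Y with hcdef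
    have hc : 0 < c := div_pos (by linarith) hcon
    have hcY : (c • Y).PosSemidef := by
      refine PosSemidef.of_dotProduct_mulVec_nonneg ?_ ?_
      · show (c • Y)ᴴ = c • Y
        rw [conjTranspose_smul, hY.1.eq]
        congr 1
      · intro x
        rw [smul_mulVec, dotProduct_smul, smul_eq_mul]
        exact mul_nonneg hc.le (hY.dotProduct_mulVec_nonneg x)
    have := hpsd_le_u _ hcY
    rw [_root_.map_smul, smul_eq_mul, hcdef, div_mul_cancel₀ _ (ne_of_gt hcon)] at this
    linarith
  -- complementary slackness data
  have hfXs : f Xs = 0 := le_antisymm (hpsd_le Xs hXspsd) (hu0.trans (hfL Xs hXsL))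
  have hu : u = 0 := le_antisymm (by calc u ≤ f Xs := hfL Xs hXsL
                                        _ = 0 := hfXs) hu0
  -- the stress matrix
  set Ω : Matrix V V ℝ :=
    Matrix.of fun i j => -((f (Matrix.single i j 1) + f (Matrix.single j i 1)) / 2) with hΩdef
  have hΩapp : ∀ i j, Ω i j = -((f (Matrix.single i j 1) + f (Matrix.single j i 1)) / 2) :=
    fun i j => rfl
  have hΩsymfun : ∀ a b, Ω a b = Ω b a := by
    intro a b
    rw [hΩapp, hΩapp, add_comm]
  -- representation of f as a sum
  have hrep : ∀ X : Matrix V V ℝ, f X = ∑ i, ∑ j, X i j * f (Matrix.single i j 1) := by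
    intro X
    conv_lhs => rw [matrix_eq_sum_single X]
    rw [map_sum]
    refine Finset.sum_congr rfl fun i _ => ?_
    rw [map_sum]
    refine Finset.sum_congr rfl fun j _ => ?_
    rw [show Matrix.single i j (X i j) = X i j • Matrix.single i j (1:ℝ) from by
      rw [smul_single, smul_eq_mul, mul_one], _root_.map_smul, smul_eq_mul]
  -- key identity for symmetric matrices
  have key : ∀ X : Matrix V V ℝ, Xᵀ = X → ∑ i, ∑ j, Ω i j * X i j = -(f X) := by
    intro X hXsym
    have hXentry : ∀ a b, X b a = X a b := fun a b => congrFun (congrFun hXsym a) b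
    have hS2 : ∑ i, ∑ j, X i j * f (Matrix.single j i 1)
        = ∑ i, ∑ j, X i j * f (Matrix.single i j 1) := by
      rw [Finset.sum_comm]
      refine Finset.sum_congr rfl fun i _ => Finset.sum_congr rfl fun j _ => ?_
      rw [hXentry i j]
    have hexp : ∑ i, ∑ j, Ω i j * X i j
        = -(1/2) * (∑ i, ∑ j, X i j * f (Matrix.single i j 1))
          + -(1/2) * (∑ i, ∑ j, X i j * f (Matrix.single j i 1)) := by
      rw [Finset.mul_sum, Finset.mul_sum, ← Finset.sum_add_distrib]
      refine Finset.sum_congr rfl fun i _ => ?_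
      rw [Finset.mul_sum, Finset.mul_sum, ← Finset.sum_add_distrib]
      refine Finset.sum_congr rfl fun j _ => ?_
      rw [hΩapp]
      ring
    rw [hexp, hS2, ← hrep X]
    ring
  -- Ω is psd
  have hΩpsd : Ω.PosSemidef := by
    refine PosSemidef.of_dotProduct_mulVec_nonneg ?_ ?_
    · ext a b
      rw [conjTranspose_apply]
      rw [show star (Ω b a) = Ω b a from star_trivial _]
      exact (hΩsymfun a b).symm
    · intro x
      have h1 : star x ⬝ᵥ Ω *ᵥ x = ∑ i, ∑ j, Ω i j * (x i * x j) := by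
        rw [show star x = x from star_trivial _]
        exact aux_quad_as_sum Ω x
      have h2 : ∑ i, ∑ j, Ω i j * (x i * x j)
          = -(f (Matrix.of fun a b => x a * x b)) := by
        have hsym : (Matrix.of fun a b => x a * x b : Matrix V V ℝ)ᵀ
            = Matrix.of fun a b => x a * x b := by
          ext a b
          simp [Matrix.transpose_apply, Matrix.of_apply, mul_comm]
        have := key _ hsym
        simpa [Matrix.of_apply] using this
      rw [h1, h2]
      have := hpsd_le _ (aux_vvT_posSemidef x)
      linarith
  -- support of Ω
  have hsupp : ∀ i j, i ≠ j → ¬G.Adj i j →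
      ¬((i = i₀ ∧ j = j₀) ∨ (i = j₀ ∧ j = i₀)) → Ω i j = 0 := by
    intro i j hij hnadj' hne0
    have hmemL : ∀ c : ℝ, Xs + c • auxEsym i j ∈ L := by
      intro c
      refine ⟨?_, ?_, ?_, ?_⟩
      · rw [transpose_add, transpose_smul, hXssym, auxEsym_transpose]
      · intro a
        simp only [Matrix.add_apply, Matrix.smul_apply, smul_eq_mul]
        rw [hXsC.2.1 a, auxEsym_apply,
          if_neg (by rintro ⟨h1, h2⟩; exact hij (h1.trans h2.symm)),
          if_neg (by rintro ⟨h1, h2⟩; exact hij (h2.trans h1.symm))]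
        ring
      · intro a b hadj
        simp only [Matrix.add_apply, Matrix.smul_apply, smul_eq_mul]
        rw [hXsC.2.2 a b hadj, auxEsym_apply,
          if_neg (by rintro ⟨h1, h2⟩; exact hnadj' (by rw [h1, h2]; exact hadj)),
          if_neg (by
            rintro ⟨h1, h2⟩
            exact hnadj' (G.adj_symm (show G.Adj j i from by rw [h1, h2]; exact hadj)))]
        ring
      · simp only [Matrix.add_apply, Matrix.smul_apply, smul_eq_mul]
        rw [hXsL.2.2.2, auxEsym_apply,
          if_neg (by rintro ⟨h1, h2⟩; exact hne0 (Or.inl ⟨h1, h2⟩)),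
          if_neg (by rintro ⟨h1, h2⟩; exact hne0 (Or.inr ⟨h2, h1⟩))]
        ring
    have h0 : ∀ c : ℝ, 0 ≤ c * f (auxEsym i j) := by
      intro c
      have := hfL _ (hmemL c)
      rw [map_add, _root_.map_smul, smul_eq_mul, hfXs, hu] at this
      linarith
    have hfE : f (auxEsym i j) = 0 := by
      have h1 := h0 1
      have h2 := h0 (-1)
      rw [one_mul] at h1
      rw [neg_one_mul] at h2
      linarith
    rw [hΩapp]
    have : f (Matrix.single i j 1) + f (Matrix.single j i 1) = f (auxEsym i j) := by
      rw [auxEsym, map_add]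
    rw [this, hfE]
    norm_num
  -- Ω at the non-edge is nonzero
  have hΩne : Ω i₀ j₀ ≠ 0 := by
    intro heq
    have hBsym : Bᵀ = B := by
      have h' : Bᴴ = B := hBpd.1
      rwa [conjTranspose_eq_transpose_of_trivial] at h'
    have hBkey := key B hBsym
    have hXskey := key Xs hXssym
    have hdiff : ∑ i, ∑ j, Ω i j * B i j = ∑ i, ∑ j, Ω i j * Xs i j := by
      refine Finset.sum_congr rfl fun i _ => Finset.sum_congr rfl fun j _ => ?_
      by_cases hij : i = j
      · subst hij
        rw [hBdiag i, hXsC.2.1 i]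
      by_cases hadj : G.Adj i j
      · rw [hBedge i j hadj, hXsC.2.2 i j hadj]
      by_cases hpair : (i = i₀ ∧ j = j₀) ∨ (i = j₀ ∧ j = i₀)
      · rcases hpair with ⟨h1, h2⟩ | ⟨h1, h2⟩
        · rw [h1, h2, heq, zero_mul, zero_mul]
        · rw [h1, h2, hΩsymfun j₀ i₀, heq, zero_mul, zero_mul]
      · rw [hsupp i j hij hadj hpair, zero_mul, zero_mul]
    have hfB : f B = 0 := by
      have : -(f B) = -(f Xs) := by rw [← hBkey, hdiff, hXskey]
      rw [hfXs] at this
      linarith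
    have hBs : B ∈ s := by
      intro v hv
      have := hBpd.dotProduct_mulVec_pos hv
      simpa using this
    have := hfs B hBs
    rw [hfB, hu] at this
    exact lt_irrefl 0 this
  -- complementarity
  have hcomp : ∑ i, ∑ j, Ω i j * Xs i j = 0 := by
    rw [key Xs hXssym, hfXs, neg_zero]
  -- factorizations
  obtain ⟨Mm, hMm⟩ := aux_psd_factor hXspsd
  obtain ⟨N, hN⟩ := aux_psd_factor hΩpsd
  have hMm' : Xs = Mmᵀ * Mm := by rwa [conjTranspose_eq_transpose_of_trivial] at hMm
  have hN' : Ω = Nᵀ * N := by rwa [conjTranspose_eq_transpose_of_trivial] at hN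
  have hMΩ : Mm * Ω = 0 := by
    rw [hN']
    apply aux_factor_zero
    rw [← hN', ← hMm']
    exact hcomp
  -- the realization
  set k : ℕ := Fintype.card V with hkdef
  set e : V ≃ Fin k := Fintype.equivFin V with hedef
  set p : V → EuclideanSpace ℝ (Fin k) :=
    fun j => (WithLp.equiv 2 (Fin k → ℝ)).symm fun l => Mm (e.symm l) j with hpdef
  have hpapp : ∀ j l, p j l = Mm (e.symm l) j := fun j l => rfl
  have hinner : ∀ a b, (inner ℝ (p a) (p b) : ℝ) = Xs a b := by
    intro a b
    rw [PiLp.inner_apply]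
    simp only [RCLike.inner_apply, starRingEnd_apply, star_trivial, hpapp]
    rw [show ∑ l, Mm (e.symm l) b * Mm (e.symm l) a = ∑ m, Mm m b * Mm m a from
      Equiv.sum_comp e.symm fun m => Mm m b * Mm m a]
    rw [hMm']
    simp [Matrix.mul_apply, Matrix.transpose_apply, mul_comm]
  refine ⟨k, p, Ω, hΩpsd, ?_, ?_, hΩne, hsupp, ?_, ?_⟩
  · intro i
    rw [hinner i i, hXsC.2.1 i]
  · intro i j hadj
    rw [hinner i j, hXsC.2.2 i j hadj]
  · -- equilibrium
    intro i
    have : ∀ l : Fin k, (∑ j, Ω i j • p j) l = 0 := by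
      intro l
      rw [WithLp.ofLp_sum, Finset.sum_apply]
      have hterm : ∀ j, (Ω i j • p j) l = Ω i j * Mm (e.symm l) j := by
        intro j
        rw [PiLp.smul_apply, hpapp, smul_eq_mul]
      rw [Finset.sum_congr rfl fun j _ => hterm j]
      have : ∑ j, Ω i j * Mm (e.symm l) j = (Mm * Ω) (e.symm l) i := by
        rw [Matrix.mul_apply]
        refine Finset.sum_congr rfl fun j _ => ?_
        rw [hΩsymfun i j]
        ring
      rw [this, hMΩ]
      simp
    ext l
    simpa using this l
  · -- flatness on edges
    intro i j hadj
    have hij : i ≠ j := G.ne_of_adj hadj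
    have hBsym : ∀ a b, B b a = B a b := by
      intro a b
      have h' : Bᴴ = B := hBpd.1
      rw [conjTranspose_eq_transpose_of_trivial] at h'
      exact congrFun (congrFun h' a) b
    have hli : LinearIndependent ℝ ![p i, p j] := by
      rw [LinearIndependent.pair_iff]
      intro sc tc hst
      set v : V → ℝ := sc • (Pi.single i 1 : V → ℝ) + tc • (Pi.single j 1 : V → ℝ) with hvdef
      have hq : v ⬝ᵥ B *ᵥ v
          = sc ^ 2 * B i i + sc * tc * B i j + sc * tc * B j i + tc ^ 2 * B j j :=
        aux_single_quad B i j sc tc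
      have hinner0 : (inner ℝ (sc • p i + tc • p j) (sc • p i + tc • p j) : ℝ) = 0 := by
        rw [hst]
        simp
      have hexp : (inner ℝ (sc • p i + tc • p j) (sc • p i + tc • p j) : ℝ)
          = sc ^ 2 * Xs i i + 2 * (sc * tc) * Xs i j + tc ^ 2 * Xs j j := by
        rw [real_inner_add_add_self]
        rw [real_inner_smul_left, real_inner_smul_right, real_inner_smul_left,
          real_inner_smul_right, real_inner_smul_left, real_inner_smul_right]
        rw [hinner i i, hinner i j, hinner j j]
        ring
      have hqz : v ⬝ᵥ B *ᵥ v = 0 := by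
        rw [hq]
        have e1 : B i i = Xs i i := by rw [hBdiag i, hXsC.2.1 i]
        have e2 : B j j = Xs j j := by rw [hBdiag j, hXsC.2.1 j]
        have e3 : B i j = Xs i j := by rw [hBedge i j hadj, hXsC.2.2 i j hadj]
        have e4 : B j i = Xs i j := by rw [hBsym i j, e3]
        rw [e1, e2, e3, e4]
        have := hexp.symm.trans hinner0
        linarith
      have hv0 : v = 0 := by
        by_contra hv
        have := hBpd.dotProduct_mulVec_pos hv
        rw [show star v = v from star_trivial _] at this
        rw [hqz] at this
        exact lt_irrefl 0 this
      constructor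
      · have := congrFun hv0 i
        simpa [hvdef, Pi.single_eq_same, Pi.single_eq_of_ne hij] using this
      · have := congrFun hv0 j
        simpa [hvdef, Pi.single_eq_same, Pi.single_eq_of_ne hij.symm] using this
    have hrange : ({p i, p j} : Set (EuclideanSpace ℝ (Fin k)))
        = Set.range ![p i, p j] := by
      rw [Matrix.range_cons_cons_empty]
    rw [hrange, finrank_span_eq_card hli, Fintype.card_fin]
end
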